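/- arXiv:0906.1553 — 3 statements merged into one kernel-verified Lean document; each statement's English description precedes it below -/
import Mathlib

section
/- The polynomials D_n(alpha, u) = sum_{pi in S_n} alpha^(cyc>1(pi)) * u^(fix(pi)), where cyc>1(pi) counts cycles of length greater than 1 and fix(pi) counts fixed points, satisfy C_n(a, r) = D_n(a, a + r) for all n, as a polynomial identity in a and r. -/
open Finset

noncomputable def rf {R : Type*} [CommRing R] (a : R) (k : ℕ) : R :=
  (ascPochhammer R k).eval a

noncomputable def Ch {R : Type*} [CommRing R] (a r : R) (n : ℕ) : R :=
  ∑ k ∈ Finset.range (n + 1), (n.choose k : R) * rf a k * r ^ (n - k)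

section ChRec
variable {R : Type*} [CommRing R] (a r : R)

lemma rf_zero : rf a 0 = 1 := by simp [rf]

lemma rf_succ (k : ℕ) : rf a (k + 1) = rf a k * (a + k) := by
  simp [rf, ascPochhammer_succ_right]

lemma Ch_zero : Ch a r 0 = 1 := by simp [Ch, rf_zero]

lemma Ch_one : Ch a r 1 = a + r := by
  simp [Ch, Finset.sum_range_succ, rf_zero, rf_succ a 0]
  ring

/-- shifted sum -/
noncomputable def Chs (a r : R) (n : ℕ) : R :=
  ∑ k ∈ Finset.range (n + 1), (n.choose k : R) * rf a (k + 1) * r ^ (n - k)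

lemma sum_aux (n : ℕ) :
    ∑ k ∈ range (n + 1), (n.choose k : R) * rf a k * r ^ (n + 1 - k) = r * Ch a r n := by
  rw [Ch, Finset.mul_sum]
  refine Finset.sum_congr rfl fun k hk => ?_
  have hk' : k ≤ n := Nat.lt_succ_iff.mp (Finset.mem_range.mp hk)
  have h : n + 1 - k = (n - k) + 1 := by omega
  rw [h, pow_succ]
  ring

lemma Ch_succ (n : ℕ) : Ch a r (n + 1) = r * Ch a r n + Chs a r n := by
  rw [Ch, Finset.sum_range_succ']
  have h1 : ∀ k ∈ range (n + 1),
      ((n + 1).choose (k + 1) : R) * rf a (k + 1) * r ^ (n + 1 - (k + 1))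
        = (n.choose k : R) * rf a (k + 1) * r ^ (n - k)
          + (n.choose (k + 1) : R) * rf a (k + 1) * r ^ (n - k) := by
    intro k hk
    rw [Nat.choose_succ_succ]
    have h : n + 1 - (k + 1) = n - k := by omega
    push_cast [Nat.succ_eq_add_one]
    ring
  rw [Finset.sum_congr rfl h1, Finset.sum_add_distrib]
  have h2 : (∑ k ∈ range (n + 1), (n.choose (k + 1) : R) * rf a (k + 1) * r ^ (n - k))
      + ((n + 1).choose 0 : R) * rf a 0 * r ^ (n + 1 - 0)
      = r * Ch a r n := by
    rw [← sum_aux a r n, Finset.sum_range_succ' (fun k => (n.choose k : R) * rf a k * r ^ (n + 1 - k)) n]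
    have h3 : ∀ k ∈ range n,
        (n.choose (k + 1) : R) * rf a (k + 1) * r ^ (n + 1 - (k + 1))
          = (n.choose (k + 1) : R) * rf a (k + 1) * r ^ (n - k) := by
      intro k hk
      have h : n + 1 - (k + 1) = n - k := by omega
      rw [h]
    rw [Finset.sum_congr rfl h3]
    rw [Finset.sum_range_succ]
    simp [Nat.choose_succ_self]
  rw [Chs]
  rw [add_assoc, h2]
  ring

lemma Chs_zero : Chs a r 0 = a := by
  simp [Chs, rf_succ a 0, rf_zero]

lemma Chs_succ (n : ℕ) :
    Chs a r (n + 1) = a * Ch a r (n + 1) + ((n + 1 : ℕ) : R) * Chs a r n := by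
  have h0 : Chs a r (n + 1)
      = ∑ k ∈ range (n + 2), ((n + 1).choose k : R) * rf a k * (a + k) * r ^ (n + 1 - k) := by
    rw [Chs]
    refine Finset.sum_congr rfl fun k hk => ?_
    rw [rf_succ]; ring
  have h1 : Chs a r (n + 1)
      = a * Ch a r (n + 1)
        + ∑ k ∈ range (n + 2), (k : R) * (((n + 1).choose k : R) * rf a k * r ^ (n + 1 - k)) := by
    rw [h0, Ch, Finset.mul_sum, ← Finset.sum_add_distrib]
    refine Finset.sum_congr rfl fun k hk => ?_
    ring
  rw [h1]
  congr 1
  rw [Finset.sum_range_succ']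
  simp only [Nat.cast_zero, zero_mul, add_zero]
  have h2 : ∀ k ∈ range (n + 1),
      ((k + 1 : ℕ) : R) * (((n + 1).choose (k + 1) : R) * rf a (k + 1) * r ^ (n + 1 - (k + 1)))
        = ((n + 1 : ℕ) : R) * ((n.choose k : R) * rf a (k + 1) * r ^ (n - k)) := by
    intro k hk
    have hch : ((n + 1) * n.choose k : ℕ) = ((n + 1).choose (k + 1) * (k + 1) : ℕ) :=
      Nat.add_one_mul_choose_eq n k
    have h : n + 1 - (k + 1) = n - k := by omega
    rw [h]
    have := congrArg (fun x : ℕ => (x : R)) hch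
    push_cast at this ⊢
    linear_combination (-(rf a (k + 1) * r ^ (n - k))) * this
  rw [Finset.sum_congr rfl h2, ← Finset.mul_sum]
  rfl

lemma Ch_rec (n : ℕ) :
    Ch a r (n + 1) = (a + r + (n : R)) * Ch a r n - r * (n : R) * Ch a r (n - 1) := by
  cases n with
  | zero => simp [Ch_one, Ch_zero]
  | succ t =>
    have h1 := Ch_succ a r (t + 1)
    have h2 := Chs_succ a r t
    have h3 := Ch_succ a r t
    have h4 : Chs a r t = Ch a r (t + 1) - r * Ch a r t := by rw [h3]; ring
    rw [h1, h2, h4]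
    have : (t + 1 : ℕ) - 1 = t := by omega
    rw [this]
    push_cast
    ring
end ChRec


open Equiv Equiv.Perm

/-- Number of fixed points of a permutation. -/
def fixc {α : Type*} [Fintype α] [DecidableEq α] (π : Equiv.Perm α) : ℕ :=
  (Finset.univ.filter fun i => π i = i).card

section PermLemmas
variable {α : Type*} [DecidableEq α] [Fintype α]

lemma fixc_add_card_support (π : Perm α) :
    fixc π + π.support.card = Fintype.card α := by
  rw [fixc]
  have : π.support = Finset.univ.filter fun x => ¬ π x = x := rfl
  rw [this]
  exact Finset.card_filter_add_card_filter_not _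

lemma isCycle_swap_mul_of_fixed {d : Perm α} {x y : α}
    (hd : d.IsCycle) (hx : d x = x) (hy : d y ≠ y) : (Equiv.swap x y * d).IsCycle := by
  have hxy : x ≠ y := by rintro rfl; exact hy hx
  have hpow : ∀ k : ℕ, (d ^ k) x = x := fun k => by
    induction k with
    | zero => rfl
    | succ k ih => rw [pow_succ, Perm.mul_apply, hx, ih]
  have hne : ∀ k : ℕ, (d ^ k) y ≠ x := by
    intro k h
    exact hxy ((d ^ k).injective (by rw [h, hpow k])).symm
  have hcx : (Equiv.swap x y * d) x = y := by
    rw [Perm.mul_apply, hx, Equiv.swap_apply_left]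
  have hkey : ∀ k : ℕ, (Equiv.swap x y * d).SameCycle x ((d ^ k) y) := by
    intro k
    induction k with
    | zero => exact ⟨1, by simpa using hcx⟩
    | succ k ih =>
      by_cases h1 : d ((d ^ k) y) = y
      · have h2 : (d ^ (k + 1)) y = y := by rw [pow_succ', Perm.mul_apply, h1]
        rw [h2]
        exact ⟨1, by simpa using hcx⟩
      · have hxne : d ((d ^ k) y) ≠ x := by
          rw [← Perm.mul_apply, ← pow_succ']
          exact hne (k + 1)
        have h2 : (d ^ (k + 1)) y = (Equiv.swap x y * d) ((d ^ k) y) := by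
          rw [pow_succ', Perm.mul_apply, Perm.mul_apply,
            Equiv.swap_apply_of_ne_of_ne hxne h1]
        exact ih.trans ⟨1, by simpa using h2.symm⟩
  refine ⟨x, by rw [hcx]; exact hxy.symm, fun z hz => ?_⟩
  by_cases hzx : z = x
  · rw [hzx]
  by_cases hdz : d z = z
  · exfalso
    rw [Perm.mul_apply, hdz] at hz
    rcases eq_or_ne z y with rfl | hzy
    · exact hy hdz
    · exact hz (Equiv.swap_apply_of_ne_of_ne hzx hzy)
  · have hsc : d.SameCycle y z := hd.sameCycle hy hdz
    obtain ⟨i, -, -, hi⟩ := hsc.exists_pow_eq d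
    exact hi ▸ hkey i

lemma support_swap_mul_of_fixed {g : Perm α} {x y : α} (hx : g x = x) (hy : g y ≠ y) :
    (Equiv.swap x y * g).support = insert x g.support := by
  have hxy : x ≠ y := by rintro rfl; exact hy hx
  ext z
  simp only [Perm.mem_support, Finset.mem_insert, Perm.mul_apply]
  constructor
  · intro hz
    by_cases hzx : z = x
    · exact Or.inl hzx
    · refine Or.inr fun hgz => ?_
      have hzy : z ≠ y := by rintro rfl; exact hy hgz
      exact hz (by rw [hgz, Equiv.swap_apply_of_ne_of_ne hzx hzy])
  · rintro (rfl | hgz)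
    · rw [hx, Equiv.swap_apply_left]
      exact hxy.symm
    · intro h
      rcases eq_or_ne (g z) x with h1 | h1
      · have hzx : z = x := g.injective (h1.trans hx.symm)
        exact hgz (h1.trans hzx.symm)
      rcases eq_or_ne (g z) y with h2 | h2
      · rw [h2, Equiv.swap_apply_right] at h
        rw [← h] at h2
        exact hxy (hx.symm.trans h2)
      · rw [Equiv.swap_apply_of_ne_of_ne h1 h2] at h
        exact hgz h

lemma card_cycleType_swap_mul {g : Perm α} {x y : α} (hx : g x = x) (hy : g y ≠ y) :
    Multiset.card (Equiv.swap x y * g).cycleType = Multiset.card g.cycleType := by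
  have hxy : x ≠ y := by rintro rfl; exact hy hx
  have hy' : y ∈ g.support := Perm.mem_support.mpr hy
  have hdmem : g.cycleOf y ∈ g.cycleFactorsFinset :=
    Perm.cycleOf_mem_cycleFactorsFinset_iff.mpr hy'
  have hdisj : (g * (g.cycleOf y)⁻¹).Disjoint (g.cycleOf y) :=
    Perm.disjoint_mul_inv_of_mem_cycleFactorsFinset hdmem
  set d := g.cycleOf y with hdd
  set h := g * d⁻¹ with hhh
  have hgd : g = h * d := by rw [hhh, inv_mul_cancel_right]
  have hdx : d x = x := by
    rw [hdd, Perm.cycleOf_apply]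
    split_ifs with hs
    · exact hx
    · rfl
  have hdy : d y ≠ y := by rw [hdd, Perm.cycleOf_apply_self]; exact hy
  have hdC : d.IsCycle := Perm.isCycle_cycleOf g hy
  have hcC : (Equiv.swap x y * d).IsCycle := isCycle_swap_mul_of_fixed hdC hdx hdy
  have hhx : h x = x := by
    rw [hhh, Perm.mul_apply, Perm.inv_eq_iff_eq.mpr hdx.symm, hx]
  have hhy : h y = y := by
    rcases hdisj y with h1 | h1
    · exact h1
    · exact absurd h1 hdy
  have hds : (Equiv.swap x y).Disjoint h := by
    intro z
    by_cases h1 : z = x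
    · right; rw [h1]; exact hhx
    by_cases h2 : z = y
    · right; rw [h2]; exact hhy
    · left; exact Equiv.swap_apply_of_ne_of_ne h1 h2
  have heq : Equiv.swap x y * g = h * (Equiv.swap x y * d) := by
    rw [hgd, ← mul_assoc, hds.commute.eq, mul_assoc]
  have hdisj2 : h.Disjoint (Equiv.swap x y * d) := by
    intro z
    by_cases h1 : z = x
    · left; rw [h1]; exact hhx
    by_cases h2 : d z = z
    · by_cases h3 : z = y
      · exact absurd (h3 ▸ h2) hdy
      · right; rw [Perm.mul_apply, h2]; exact Equiv.swap_apply_of_ne_of_ne h1 h3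
    · left
      rcases hdisj z with h4 | h4
      · exact h4
      · exact absurd h4 h2
  rw [heq, hdisj2.cycleType_mul, hgd, hdisj.cycleType_mul]
  simp [hcC.cycleType, hdC.cycleType]

lemma swap_mul_fixed_disjoint {g : Perm α} {x y : α} (hx : g x = x) (hy : g y = y) :
    (Equiv.swap x y).Disjoint g := by
  intro z
  by_cases h1 : z = x
  · right; rw [h1]; exact hx
  by_cases h2 : z = y
  · right; rw [h2]; exact hy
  · left; exact Equiv.swap_apply_of_ne_of_ne h1 h2

lemma cycleType_swap {x y : α} (hxy : x ≠ y) : (Equiv.swap x y).cycleType = {2} := by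
  rw [(isCycle_swap hxy).cycleType, card_support_swap hxy]

end PermLemmas

section FinLemmas

/-- the equiv `Fin m ≃ {x : Fin (m+1) // x ≠ 0}` -/
def succEquiv (m : ℕ) : Fin m ≃ {x : Fin (m + 1) // x ≠ 0} where
  toFun x := ⟨x.succ, Fin.succ_ne_zero x⟩
  invFun y := y.1.pred y.2
  left_inv x := Fin.pred_succ x
  right_inv y := Subtype.ext (Fin.succ_pred y.1 y.2)

lemma decomposeFin_zero_eq {m : ℕ} (e : Perm (Fin m)) :
    Equiv.Perm.decomposeFin.symm ((0 : Fin (m + 1)), e) = e.extendDomain (succEquiv m) := by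
  refine Equiv.ext fun x => Fin.cases ?_ (fun i => ?_) x
  · have hR := Perm.extendDomain_apply_not_subtype e (succEquiv m)
      (b := (0 : Fin (m + 1))) (by simp)
    rw [Perm.decomposeFin_symm_apply_zero, hR]
  · have hR := Perm.extendDomain_apply_subtype e (succEquiv m) (Fin.succ_ne_zero i)
    rw [Perm.decomposeFin_symm_apply_succ, hR]
    simp [succEquiv, Fin.pred_succ]

lemma decomposeFin_eq_swap_mul {m : ℕ} (p : Fin (m + 1)) (e : Perm (Fin m)) :
    Equiv.Perm.decomposeFin.symm (p, e)
      = Equiv.swap 0 p * Equiv.Perm.decomposeFin.symm ((0 : Fin (m + 1)), e) := by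
  refine Equiv.ext fun x => Fin.cases ?_ (fun i => ?_) x
  · simp
  · simp [Perm.decomposeFin_symm_apply_succ]

lemma g0_cycleType {m : ℕ} (e : Perm (Fin m)) :
    (Equiv.Perm.decomposeFin.symm ((0 : Fin (m + 1)), e)).cycleType = e.cycleType := by
  rw [decomposeFin_zero_eq, Perm.cycleType_extendDomain]

lemma g0_support {m : ℕ} (e : Perm (Fin m)) :
    (Equiv.Perm.decomposeFin.symm ((0 : Fin (m + 1)), e)).support.card = e.support.card := by
  rw [decomposeFin_zero_eq, Perm.card_support_extend_domain]

lemma g0_fixc {m : ℕ} (e : Perm (Fin m)) :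
    fixc (Equiv.Perm.decomposeFin.symm ((0 : Fin (m + 1)), e)) = fixc e + 1 := by
  have h1 := fixc_add_card_support (Equiv.Perm.decomposeFin.symm ((0 : Fin (m + 1)), e))
  have h2 := fixc_add_card_support e
  rw [g0_support e] at h1
  simp only [Fintype.card_fin] at h1 h2
  omega

lemma fixc_le {m : ℕ} (e : Perm (Fin m)) : fixc e ≤ m := by
  have h := fixc_add_card_support e
  simp only [Fintype.card_fin] at h
  omega

lemma g0_apply_succ {m : ℕ} (e : Perm (Fin m)) (q : Fin m) :
    Equiv.Perm.decomposeFin.symm ((0 : Fin (m + 1)), e) q.succ = (e q).succ := by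
  rw [Perm.decomposeFin_symm_apply_succ]
  simp

end FinLemmas


section DF

lemma df_pascal (f j : ℕ) :
    (f + 1).descFactorial j = f.descFactorial j + j * f.descFactorial (j - 1) := by
  cases j with
  | zero => simp
  | succ k =>
    rw [Nat.succ_descFactorial_succ, Nat.descFactorial_succ]
    rcases le_or_gt k f with h | h
    · simp only [Nat.add_sub_cancel]
      rw [← add_mul]
      congr 1
      omega
    · have h0 : f.descFactorial k = 0 := Nat.descFactorial_eq_zero_iff_lt.mpr h
      simp [h0]

lemma df_mul_pred (f j : ℕ) :
    f * (f - 1).descFactorial j = f.descFactorial (j + 1) := by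
  cases f with
  | zero => simp
  | succ s => rw [Nat.succ_descFactorial_succ]; simp

lemma df_mul_self (f j : ℕ) :
    f * f.descFactorial j = f.descFactorial (j + 1) + j * f.descFactorial j := by
  rw [Nat.descFactorial_succ]
  rcases le_or_gt j f with h | h
  · rw [← add_mul]
    congr 1
    omega
  · have h0 : f.descFactorial j = 0 := Nat.descFactorial_eq_zero_iff_lt.mpr h
    simp [h0]

variable {R : Type*} [CommRing R]

/-- `df j * u^(f+1-j) = u * df j * u^(f-j)` -/
lemma pow_helper1 (u : R) (f j : ℕ) :
    (f.descFactorial j : R) * u ^ (f + 1 - j) = u * ((f.descFactorial j : R) * u ^ (f - j)) := by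
  rcases le_or_gt j f with h | h
  · have : f + 1 - j = (f - j) + 1 := by omega
    rw [this, pow_succ]
    ring
  · have h0 : f.descFactorial j = 0 := Nat.descFactorial_eq_zero_iff_lt.mpr h
    simp [h0]

/-- `df (j+1) * u^(f-j) = u * df (j+1) * u^(f-(j+1))` -/
lemma pow_helper2 (u : R) (f j : ℕ) :
    (f.descFactorial (j + 1) : R) * u ^ (f - j)
      = u * ((f.descFactorial (j + 1) : R) * u ^ (f - (j + 1))) := by
  rcases le_or_gt (j + 1) f with h | h
  · have : f - j = (f - (j + 1)) + 1 := by omega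
    rw [this, pow_succ]
    ring
  · have h0 : f.descFactorial (j + 1) = 0 := Nat.descFactorial_eq_zero_iff_lt.mpr h
    rw [h0]
    simp

lemma per_e (a u : R) (m f c j : ℕ) (hf : f ≤ m) :
    ((f + 1).descFactorial j : R) * a ^ c * u ^ (f + 1 - j)
      + (f : R) * (((f - 1).descFactorial j : R) * a ^ (c + 1) * u ^ (f - 1 - j))
      + ((m - f : ℕ) : R) * ((f.descFactorial j : R) * a ^ c * u ^ (f - j))
    = u * ((f.descFactorial j : R) * a ^ c * u ^ (f - j))
      + (j : R) * ((f.descFactorial (j - 1) : R) * a ^ c * u ^ (f - (j - 1)))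
      + a * ((f.descFactorial (j + 1) : R) * a ^ c * u ^ (f - (j + 1)))
      + (m : R) * ((f.descFactorial j : R) * a ^ c * u ^ (f - j))
      - u * ((f.descFactorial (j + 1) : R) * a ^ c * u ^ (f - (j + 1)))
      - (j : R) * ((f.descFactorial j : R) * a ^ c * u ^ (f - j)) := by
  have hmf : ((m - f : ℕ) : R) = (m : R) - (f : R) := by
    rw [Nat.cast_sub hf]
  -- term 1 expansion
  have h1 : ((f + 1).descFactorial j : R) * a ^ c * u ^ (f + 1 - j)
      = u * ((f.descFactorial j : R) * a ^ c * u ^ (f - j))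
        + (j : R) * ((f.descFactorial (j - 1) : R) * a ^ c * u ^ (f - (j - 1))) := by
    have hcast : ((f + 1).descFactorial j : R)
        = (f.descFactorial j : R) + (j : R) * (f.descFactorial (j - 1) : R) := by
      rw [df_pascal]
      push_cast
      ring
    rw [hcast, add_mul, add_mul]
    congr 1
    · rw [mul_comm ((f.descFactorial j : R)) (a ^ c), mul_assoc, pow_helper1]
      ring
    · cases j with
      | zero => simp
      | succ k =>
        have : f + 1 - (k + 1) = f - ((k + 1) - 1) := by omega
        rw [this]
        ring
  -- term 2
  have h2 : (f : R) * (((f - 1).descFactorial j : R) * a ^ (c + 1) * u ^ (f - 1 - j))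
      = a * ((f.descFactorial (j + 1) : R) * a ^ c * u ^ (f - (j + 1))) := by
    have hcast : (f : R) * ((f - 1).descFactorial j : R) = (f.descFactorial (j + 1) : R) := by
      rw [← Nat.cast_mul, df_mul_pred]
    have hexp : f - 1 - j = f - (j + 1) := by omega
    rw [hexp, pow_succ]
    calc (f : R) * (((f - 1).descFactorial j : R) * (a ^ c * a) * u ^ (f - (j + 1)))
        = ((f : R) * ((f - 1).descFactorial j : R)) * (a ^ c * a) * u ^ (f - (j + 1)) := by ring
      _ = a * ((f.descFactorial (j + 1) : R) * a ^ c * u ^ (f - (j + 1))) := by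
          rw [hcast]; ring
  -- term 3
  have h3 : (f : R) * ((f.descFactorial j : R) * a ^ c * u ^ (f - j))
      = u * ((f.descFactorial (j + 1) : R) * a ^ c * u ^ (f - (j + 1)))
        + (j : R) * ((f.descFactorial j : R) * a ^ c * u ^ (f - j)) := by
    have hcast : (f : R) * (f.descFactorial j : R)
        = (f.descFactorial (j + 1) : R) + (j : R) * (f.descFactorial j : R) := by
      rw [← Nat.cast_mul, df_mul_self]
      push_cast
      ring
    calc (f : R) * ((f.descFactorial j : R) * a ^ c * u ^ (f - j))
        = ((f : R) * (f.descFactorial j : R)) * a ^ c * u ^ (f - j) := by ring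
      _ = (f.descFactorial (j + 1) : R) * a ^ c * u ^ (f - j)
          + (j : R) * ((f.descFactorial j : R) * a ^ c * u ^ (f - j)) := by
          rw [hcast]; ring
      _ = u * ((f.descFactorial (j + 1) : R) * a ^ c * u ^ (f - (j + 1)))
          + (j : R) * ((f.descFactorial j : R) * a ^ c * u ^ (f - j)) := by
          rw [mul_comm ((f.descFactorial (j + 1) : R)) (a ^ c), mul_assoc, pow_helper2]
          ring
  rw [h1, h2, hmf]
  linear_combination -h3

end DF


/-- `D_n(α,u) = ∑_{π ∈ S_n} α^{cyc_{>1}(π)} u^{fix(π)}`; the number of cycles of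
length `> 1` is the number of parts of the cycle type. -/
noncomputable def Dpol {R : Type*} [CommRing R] (n : ℕ) (α u : R) : R :=
  ∑ π : Equiv.Perm (Fin n), α ^ π.cycleType.card * u ^ fixc π

section Final
variable {R : Type*} [CommRing R]

lemma final_alg (a r : R) (m j : ℕ) :
    ((m + 1).descFactorial j : R) * Ch a r (m + 1 - j)
      = (a + r) * ((m.descFactorial j : R) * Ch a r (m - j))
        + (j : R) * ((m.descFactorial (j - 1) : R) * Ch a r (m - (j - 1)))
        + a * ((m.descFactorial (j + 1) : R) * Ch a r (m - (j + 1)))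
        + (m : R) * ((m.descFactorial j : R) * Ch a r (m - j))
        - (a + r) * ((m.descFactorial (j + 1) : R) * Ch a r (m - (j + 1)))
        - (j : R) * ((m.descFactorial j : R) * Ch a r (m - j)) := by
  rcases Nat.lt_or_ge m j with hj | hj
  · have h1 : m.descFactorial j = 0 := Nat.descFactorial_eq_zero_iff_lt.mpr hj
    have h2 : m.descFactorial (j + 1) = 0 := Nat.descFactorial_eq_zero_iff_lt.mpr (by omega)
    have h3 : (m + 1).descFactorial j = j * m.descFactorial (j - 1) := by
      rw [df_pascal, h1, zero_add]
    have h4 : m + 1 - j = m - (j - 1) := by omega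
    rw [h1, h2, h3, h4]
    push_cast
    ring
  · cases j with
    | zero =>
      simp only [Nat.descFactorial_zero, Nat.cast_one, one_mul, Nat.cast_zero, zero_mul,
        Nat.sub_zero, Nat.zero_sub, zero_add, Nat.descFactorial_one, add_zero, sub_zero,
        Nat.add_sub_cancel]
      linear_combination Ch_rec a r m
    | succ k =>
      set s := m - (k + 1) with hss
      have hs1 : m + 1 - (k + 1) = s + 1 := by omega
      have hs2 : m - ((k + 1) - 1) = s + 1 := by omega
      have hs4 : m - (k + 1 + 1) = s - 1 := by omega
      have hs3 : m.descFactorial (k + 1 + 1) = s * m.descFactorial (k + 1) := by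
        rw [Nat.descFactorial_succ]
      have hp := df_pascal m (k + 1)
      rw [hs1, hs2, hs4, hs3, hp]
      have hrec := Ch_rec a r s
      rw [hrec]
      have hcast : ((s : ℕ) : R) = (m : R) - ((k : ℕ) : R) - 1 := by
        rw [hss, Nat.cast_sub (by omega)]
        push_cast
        ring
      push_cast
      rw [hcast]
      ring

lemma key (a r : R) (n : ℕ) : ∀ j : ℕ,
    (∑ π : Equiv.Perm (Fin n), ((fixc π).descFactorial j : R)
        * a ^ (Multiset.card π.cycleType) * (a + r) ^ (fixc π - j))
      = (n.descFactorial j : R) * Ch a r (n - j) := by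
  induction n with
  | zero =>
    intro j
    haveI : Subsingleton (Equiv.Perm (Fin 0)) := ⟨fun f g => Equiv.ext fun x => x.elim0⟩
    rw [Fintype.sum_subsingleton _ (1 : Equiv.Perm (Fin 0))]
    have hfix : fixc (1 : Equiv.Perm (Fin 0)) = 0 := rfl
    rw [hfix, Equiv.Perm.cycleType_one, Nat.zero_sub, Ch_zero]
    simp
  | succ m ih =>
    intro j
    have hre := Equiv.sum_comp (Equiv.Perm.decomposeFin (n := m)).symm
      (fun π : Equiv.Perm (Fin (m + 1)) => ((fixc π).descFactorial j : R)
        * a ^ (Multiset.card π.cycleType) * (a + r) ^ (fixc π - j))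
    rw [← hre, Fintype.sum_prod_type, Finset.sum_comm]
    have hinner : ∀ e : Equiv.Perm (Fin m),
        (∑ p : Fin (m + 1), ((fixc (Equiv.Perm.decomposeFin.symm (p, e))).descFactorial j : R)
          * a ^ (Multiset.card (Equiv.Perm.decomposeFin.symm (p, e)).cycleType)
          * (a + r) ^ (fixc (Equiv.Perm.decomposeFin.symm (p, e)) - j))
        = (a + r) * (((fixc e).descFactorial j : R) * a ^ (Multiset.card e.cycleType)
              * (a + r) ^ (fixc e - j))
          + (j : R) * (((fixc e).descFactorial (j - 1) : R) * a ^ (Multiset.card e.cycleType)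
              * (a + r) ^ (fixc e - (j - 1)))
          + a * (((fixc e).descFactorial (j + 1) : R) * a ^ (Multiset.card e.cycleType)
              * (a + r) ^ (fixc e - (j + 1)))
          + (m : R) * (((fixc e).descFactorial j : R) * a ^ (Multiset.card e.cycleType)
              * (a + r) ^ (fixc e - j))
          - (a + r) * (((fixc e).descFactorial (j + 1) : R) * a ^ (Multiset.card e.cycleType)
              * (a + r) ^ (fixc e - (j + 1)))
          - (j : R) * (((fixc e).descFactorial j : R) * a ^ (Multiset.card e.cycleType)
              * (a + r) ^ (fixc e - j)) := by
      intro e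
      set g : Equiv.Perm (Fin (m + 1)) := Equiv.Perm.decomposeFin.symm ((0 : Fin (m + 1)), e)
        with hg
      have hg0 : g 0 = 0 := Equiv.Perm.decomposeFin_symm_apply_zero 0 e
      have hsupg : g.support.card = e.support.card := g0_support e
      have hfixg : fixc g = fixc e + 1 := g0_fixc e
      have hctg : Multiset.card g.cycleType = Multiset.card e.cycleType := by
        rw [hg, g0_cycleType]
      have hq : ∀ q : Fin m,
          ((fixc (Equiv.Perm.decomposeFin.symm (q.succ, e))).descFactorial j : R)
            * a ^ (Multiset.card (Equiv.Perm.decomposeFin.symm (q.succ, e)).cycleType)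
            * (a + r) ^ (fixc (Equiv.Perm.decomposeFin.symm (q.succ, e)) - j)
          = if e q = q then
              (((fixc e - 1).descFactorial j : R)
                * a ^ (Multiset.card e.cycleType + 1) * (a + r) ^ (fixc e - 1 - j))
            else (((fixc e).descFactorial j : R)
                * a ^ (Multiset.card e.cycleType) * (a + r) ^ (fixc e - j)) := by
        intro q
        have hne : (0 : Fin (m + 1)) ≠ q.succ := (Fin.succ_ne_zero q).symm
        have hdec : Equiv.Perm.decomposeFin.symm (q.succ, e) = Equiv.swap 0 q.succ * g := by
          rw [hg]; exact decomposeFin_eq_swap_mul q.succ e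
        by_cases hc : e q = q
        · rw [if_pos hc]
          have hgq : g q.succ = q.succ := by rw [hg, g0_apply_succ, hc]
          have hds := swap_mul_fixed_disjoint hg0 hgq
          have hct : Multiset.card (Equiv.swap 0 q.succ * g).cycleType
              = Multiset.card e.cycleType + 1 := by
            rw [hds.cycleType_mul, Multiset.card_add, cycleType_swap hne, hctg]
            simp [add_comm]
          have hsup : (Equiv.swap 0 q.succ * g).support.card = e.support.card + 2 := by
            rw [hds.card_support_mul, card_support_swap hne, hsupg]
            omega
          have hfq : 1 ≤ fixc e := by
            rw [fixc]
            refine Finset.card_pos.mpr ⟨q, ?_⟩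
            simp [hc]
          have hfse : fixc e + e.support.card = m := by
            have h := fixc_add_card_support e
            simpa using h
          have hfix : fixc (Equiv.swap 0 q.succ * g) = fixc e - 1 := by
            have h1 := fixc_add_card_support (Equiv.swap 0 q.succ * g)
            rw [hsup] at h1
            simp only [Fintype.card_fin] at h1
            omega
          rw [hdec, hfix, hct]
        · rw [if_neg hc]
          have hgq : g q.succ ≠ q.succ := by
            rw [hg, g0_apply_succ]
            exact fun h => hc (Fin.succ_inj.mp h)
          have hct : Multiset.card (Equiv.swap 0 q.succ * g).cycleType
              = Multiset.card e.cycleType := by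
            rw [card_cycleType_swap_mul hg0 hgq, hctg]
          have hsup : (Equiv.swap 0 q.succ * g).support.card = e.support.card + 1 := by
            rw [support_swap_mul_of_fixed hg0 hgq,
              Finset.card_insert_of_notMem (Equiv.Perm.notMem_support.mpr hg0), hsupg]
          have hfse : fixc e + e.support.card = m := by
            have h := fixc_add_card_support e
            simpa using h
          have hfix : fixc (Equiv.swap 0 q.succ * g) = fixc e := by
            have h1 := fixc_add_card_support (Equiv.swap 0 q.succ * g)
            rw [hsup] at h1
            simp only [Fintype.card_fin] at h1
            omega
          rw [hdec, hfix, hct]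
      rw [Fin.sum_univ_succ, Finset.sum_congr rfl (fun q _ => hq q), Finset.sum_ite,
        Finset.sum_const, Finset.sum_const]
      have hc1 : (Finset.univ.filter fun q : Fin m => e q = q).card = fixc e := rfl
      have hc2 : (Finset.univ.filter fun q : Fin m => ¬ e q = q).card = m - fixc e := by
        have h := Finset.card_filter_add_card_filter_not
          (s := (Finset.univ : Finset (Fin m))) (p := fun q => e q = q)
        simp only [Finset.card_univ, Fintype.card_fin] at h
        omega
      rw [hc1, hc2, nsmul_eq_mul, nsmul_eq_mul, hfixg, hctg]
      have hper := per_e a (a + r) m (fixc e) (Multiset.card e.cycleType) j (fixc_le e)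
      linear_combination hper
    rw [Finset.sum_congr rfl (fun e _ => hinner e)]
    simp only [Finset.sum_add_distrib, Finset.sum_sub_distrib, ← Finset.mul_sum]
    rw [ih j, ih (j - 1), ih (j + 1)]
    rw [final_alg a r m j]

end Final

theorem stmt7 {R : Type*} [CommRing R] (n : ℕ) (a r : R) :
    Ch a r n = Dpol n a (a + r) := by
  have h := key a r n 0
  simp only [Nat.descFactorial_zero, Nat.cast_one, one_mul, Nat.sub_zero] at h
  rw [Dpol, ← h]
end

section
/- The derangement polynomial D_n(alpha) = sum over derangements pi of {1,...,n} of alpha^(cyc(pi)) satisfies D_n(alpha) = C_n(alpha, -alpha) = sum_{k=0}^n binomial(n,k) * (alpha)_k * (-alpha)^(n-k), as a polynomial identity in alpha. -/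
open Finset

/-- Number of cycles of a permutation, counting fixed points as cycles. -/
def cyc {α : Type*} [Fintype α] [DecidableEq α] (π : Equiv.Perm α) : ℕ :=
  π.cycleType.card + (Finset.univ.filter fun i => π i = i).card

/-- Derangement cycle polynomial `D_n(α) = ∑_{π derangement of [n]} α^{cyc(π)}`. -/
noncomputable def Dder {R : Type*} [CommRing R] (n : ℕ) (α : R) : R :=
  ∑ π ∈ Finset.univ.filter (fun π : Equiv.Perm (Fin n) => ∀ i, π i ≠ i),
    α ^ cyc π

open Equiv Equiv.Perm Finset


section S
variable {β : Type*} [Fintype β] [DecidableEq β]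

lemma swap_mul_cycle_support {c : Equiv.Perm β} {a b : β}
    (ha : a ∉ c.support) (hb : b ∈ c.support) :
    (Equiv.swap a b * c).support = insert a c.support := by
  have hca : c a = a := Equiv.Perm.notMem_support.mp ha
  have hanb : a ≠ b := fun h => ha (h ▸ hb)
  have hbb : c b ≠ b := Equiv.Perm.mem_support.mp hb
  ext x
  simp only [Equiv.Perm.mem_support, Finset.mem_insert, Equiv.Perm.mul_apply]
  constructor
  · intro hx
    by_cases hxa : x = a
    · exact Or.inl hxa
    refine Or.inr fun hcx => hx ?_
    have hxb : x ≠ b := by rintro rfl; exact hbb hcx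
    rw [hcx]
    exact Equiv.swap_apply_of_ne_of_ne hxa hxb
  · intro hor
    rcases eq_or_ne x a with rfl | hxa
    · rw [hca, Equiv.swap_apply_left]; exact hanb.symm
    · have hx : c x ≠ x := by
        rcases hor with h | h
        · exact absurd h hxa
        · exact h
      have hcxa : c x ≠ a := fun h2 => hxa (c.injective (h2.trans hca.symm))
      by_cases hcxb : c x = b
      · rw [hcxb, Equiv.swap_apply_right]
        intro h
        exact ha (Equiv.Perm.mem_support.mpr (h.symm ▸ hx))
      · rw [Equiv.swap_apply_of_ne_of_ne hcxa hcxb]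
        exact hx

lemma swap_mul_cycle_isCycle {c : Equiv.Perm β} (hc : c.IsCycle) {a b : β}
    (ha : a ∉ c.support) (hb : b ∈ c.support) : (Equiv.swap a b * c).IsCycle := by
  have hca : c a = a := Equiv.Perm.notMem_support.mp ha
  have hanb : a ≠ b := fun h => ha (h ▸ hb)
  set f := Equiv.swap a b * c with hf
  have hfa : f a = b := by rw [hf, Equiv.Perm.mul_apply, hca, Equiv.swap_apply_left]
  have hstep : ∀ y ∈ c.support, f y = c y ∨ (c y = b ∧ f y = a) := by
    intro y hy
    have hcya : c y ≠ a := fun h2 => ha (h2 ▸ Equiv.Perm.apply_mem_support.mpr hy)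
    by_cases hcyb : c y = b
    · right
      refine ⟨hcyb, ?_⟩
      rw [hf, Equiv.Perm.mul_apply, hcyb, Equiv.swap_apply_right]
    · left
      rw [hf, Equiv.Perm.mul_apply, Equiv.swap_apply_of_ne_of_ne hcya hcyb]
  have hpow : ∀ k : ℕ, f.SameCycle a ((c ^ k) b) := by
    intro k
    induction k with
    | zero => exact ⟨1, by simpa using hfa⟩
    | succ k ih =>
      have hy : (c ^ k) b ∈ c.support := Equiv.Perm.pow_apply_mem_support.mpr hb
      have hck : (c ^ (k + 1)) b = c ((c ^ k) b) := by
        rw [pow_succ', Equiv.Perm.mul_apply]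
      rcases hstep _ hy with h | ⟨h1, _⟩
      · exact ih.trans ⟨1, by simpa [hck] using h⟩
      · rw [hck, h1]; exact ⟨1, by simpa using hfa⟩
  refine ⟨a, by rw [hfa]; exact hanb.symm, fun y hy => ?_⟩
  rcases eq_or_ne y a with rfl | hya
  · exact Equiv.Perm.SameCycle.refl _ _
  · have hy' : y ∈ c.support := by
      have := Equiv.Perm.mem_support.mpr hy
      rw [hf, swap_mul_cycle_support ha hb] at this
      exact (Finset.mem_insert.mp this).resolve_left hya
    have hsc : c.SameCycle b y :=
      hc.sameCycle (Equiv.Perm.mem_support.mp hb) (Equiv.Perm.mem_support.mp hy')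
    obtain ⟨i, _, _, hi⟩ := hsc.exists_pow_eq c
    exact hi ▸ hpow i

lemma cyc_filter_eq (π : Equiv.Perm β) :
    (Finset.univ.filter fun i => π i = i).card = Fintype.card β - π.support.card := by
  have h := Finset.card_filter_add_card_filter_not (s := (Finset.univ : Finset β))
      (p := fun i => π i = i)
  have h2 : (Finset.univ.filter fun i => ¬ π i = i) = π.support := by
    ext x; simp [Equiv.Perm.mem_support]
  rw [h2, Finset.card_univ] at h
  omega

lemma cyc_swap_mul {σ : Equiv.Perm β} {a b : β} (ha : σ a = a) (hab : b ≠ a) :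
    cyc (Equiv.swap a b * σ) + 1 = cyc σ := by
  have haS : a ∉ σ.support := Equiv.Perm.notMem_support.mpr ha
  have hsuppN : σ.support.card ≤ Fintype.card β := Finset.card_le_univ _
  rw [cyc, cyc, cyc_filter_eq, cyc_filter_eq]
  by_cases hb : σ b = b
  · -- swap a b disjoint from σ
    have hbS : b ∉ σ.support := Equiv.Perm.notMem_support.mpr hb
    have hdisj : (Equiv.swap a b).Disjoint σ := by
      rw [Equiv.Perm.disjoint_iff_disjoint_support, Equiv.Perm.support_swap hab.symm]
      rw [Finset.disjoint_left]
      intro x hx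
      rcases Finset.mem_insert.mp hx with rfl | hx'
      · exact haS
      · rw [Finset.mem_singleton.mp hx']; exact hbS
    have hct : (Equiv.swap a b * σ).cycleType = (Equiv.swap a b).cycleType + σ.cycleType :=
      hdisj.cycleType_mul
    have hcard1 : Multiset.card (Equiv.swap a b).cycleType = 1 :=
      Equiv.Perm.card_cycleType_eq_one.mpr (Equiv.Perm.isCycle_swap hab.symm)
    have hsup : (Equiv.swap a b * σ).support = {a, b} ∪ σ.support := by
      rw [hdisj.support_mul, Equiv.Perm.support_swap hab.symm]
    have hdisj2 : _root_.Disjoint ({a, b} : Finset β) σ.support := by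
      rw [Finset.disjoint_left]
      intro x hx
      rcases Finset.mem_insert.mp hx with rfl | hx'
      · exact haS
      · rw [Finset.mem_singleton.mp hx']; exact hbS
    have hsupc : (Equiv.swap a b * σ).support.card = σ.support.card + 2 := by
      rw [hsup, Finset.card_union_of_disjoint hdisj2, Finset.card_pair hab.symm]
      omega
    have hsupN : (Equiv.swap a b * σ).support.card ≤ Fintype.card β := Finset.card_le_univ _
    rw [hct, Multiset.card_add, hcard1, hsupc]
    omega
  · -- b is in a nontrivial cycle of σ
    have hbS : b ∈ σ.support := Equiv.Perm.mem_support.mpr hb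
    set c := σ.cycleOf b with hcdef
    have hcmem : c ∈ σ.cycleFactorsFinset := Equiv.Perm.cycleOf_mem_cycleFactorsFinset_iff.mpr hbS
    have hc : c.IsCycle := Equiv.Perm.isCycle_cycleOf σ hb
    have hbc : b ∈ c.support := by
      rw [hcdef, Equiv.Perm.mem_support_cycleOf_iff]
      exact ⟨Equiv.Perm.SameCycle.refl _ _, hbS⟩
    have hac : a ∉ c.support := fun h => haS (Equiv.Perm.support_cycleOf_le σ b h)
    set d := σ * c⁻¹ with hddef
    have hdc : d.Disjoint c := Equiv.Perm.disjoint_mul_inv_of_mem_cycleFactorsFinset hcmem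
    have hσ : σ = (Equiv.swap a b * c) * (Equiv.swap a b * c)⁻¹ * σ := by group
    have hdc' : d * c = σ := by rw [hddef]; group
    have hcd : c * d = σ := by rw [← hdc.commute.eq, hdc']
    have hτ : Equiv.swap a b * σ = (Equiv.swap a b * c) * d := by
      rw [← hcd, mul_assoc]
    have hsupf : (Equiv.swap a b * c).support = insert a c.support :=
      swap_mul_cycle_support hac hbc
    have hf : (Equiv.swap a b * c).IsCycle := swap_mul_cycle_isCycle hc hac hbc
    have hsupd : d.support ⊆ σ.support := by
      intro x hx
      have := Equiv.Perm.support_mul_le σ c⁻¹ hx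
      rw [Equiv.Perm.support_inv] at this
      rcases Finset.mem_union.mp this with h | h
      · exact h
      · exact Equiv.Perm.support_cycleOf_le σ b h
    have hdisj : (Equiv.swap a b * c).Disjoint d := by
      rw [Equiv.Perm.disjoint_iff_disjoint_support, hsupf, Finset.disjoint_left]
      intro x hx
      rcases Finset.mem_insert.mp hx with rfl | hx'
      · exact fun h => haS (hsupd h)
      · exact fun h => (Finset.disjoint_left.mp (Equiv.Perm.disjoint_iff_disjoint_support.mp hdc)) h hx'
    have hct : (Equiv.swap a b * σ).cycleType = (Equiv.swap a b * c).cycleType + d.cycleType := by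
      rw [hτ, hdisj.cycleType_mul]
    have hcardf : Multiset.card (Equiv.swap a b * c).cycleType = 1 :=
      Equiv.Perm.card_cycleType_eq_one.mpr hf
    have hctd : d.cycleType = σ.cycleType - c.cycleType :=
      Equiv.Perm.cycleType_mul_inv_mem_cycleFactorsFinset_eq_sub hcmem
    have hle : c.cycleType ≤ σ.cycleType := Equiv.Perm.cycleType_le_of_mem_cycleFactorsFinset hcmem
    have hcardd : Multiset.card d.cycleType = Multiset.card σ.cycleType - 1 := by
      rw [hctd, Multiset.card_sub hle, Equiv.Perm.card_cycleType_eq_one.mpr hc]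
    have hσpos : 0 < Multiset.card σ.cycleType :=
      Equiv.Perm.card_cycleType_pos.mpr (fun h => hb (by rw [h]; rfl))
    have hsupcd : c.support ∪ d.support = σ.support := by
      rw [← hdc.symm.support_mul, hcd]
    have hsupτ : (Equiv.swap a b * σ).support = insert a σ.support := by
      rw [hτ, hdisj.support_mul, hsupf, Finset.insert_union, hsupcd]
    have hsupτc : (Equiv.swap a b * σ).support.card = σ.support.card + 1 := by
      rw [hsupτ, Finset.card_insert_of_notMem haS]
    have hsupτN : (Equiv.swap a b * σ).support.card ≤ Fintype.card β := Finset.card_le_univ _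
    rw [hct, Multiset.card_add, hcardf, hcardd, hsupτc]
    omega

lemma fixcard_ofSubtype {p : β → Prop} [DecidablePred p] (g : Equiv.Perm (Subtype p)) :
    (Finset.univ.filter fun x => Equiv.Perm.ofSubtype g x = x).card
      = (Finset.univ.filter fun i => g i = i).card
        + (Finset.univ.filter fun x => ¬ p x).card := by
  have hsplit : (Finset.univ.filter fun x => Equiv.Perm.ofSubtype g x = x)
      = (Finset.univ.filter fun x => p x ∧ Equiv.Perm.ofSubtype g x = x)
        ∪ (Finset.univ.filter fun x => ¬ p x) := by
    ext x
    simp only [Finset.mem_filter, Finset.mem_union, Finset.mem_univ, true_and]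
    by_cases hp : p x
    · simp [hp]
    · simp [hp, Equiv.Perm.ofSubtype_apply_of_not_mem g hp]
  rw [hsplit, Finset.card_union_of_disjoint (by
    rw [Finset.disjoint_left]
    intro x hx hx'
    exact (Finset.mem_filter.mp hx').2 (Finset.mem_filter.mp hx).2.1)]
  congr 1
  refine Finset.card_bij' (fun x hx => ⟨x, (Finset.mem_filter.mp hx).2.1⟩)
    (fun i _ => (i : β)) ?_ ?_ ?_ ?_
  · intro x hx
    have h := (Finset.mem_filter.mp hx).2
    simp only [Finset.mem_filter, Finset.mem_univ, true_and]
    apply Subtype.ext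
    rw [← Equiv.Perm.ofSubtype_apply_of_mem g h.1]
    exact h.2
  · intro i hi
    have h := (Finset.mem_filter.mp hi).2
    simp only [Finset.mem_filter, Finset.mem_univ, true_and]
    refine ⟨i.2, ?_⟩
    rw [Equiv.Perm.ofSubtype_apply_of_mem g i.2]
    rw [Subtype.coe_eta]
    exact congrArg Subtype.val h
  · intro x hx; rfl
  · intro i hi; rfl

lemma cyc_ofSubtype {p : β → Prop} [DecidablePred p] (g : Equiv.Perm (Subtype p)) :
    cyc (Equiv.Perm.ofSubtype g) = cyc g + (Finset.univ.filter fun x => ¬ p x).card := by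
  rw [cyc, cyc, Equiv.Perm.cycleType_ofSubtype, fixcard_ofSubtype]
  omega

lemma cyc_permCongr {γ : Type*} [Fintype γ] [DecidableEq γ] (e : γ ≃ β) (g : Equiv.Perm γ) :
    cyc (e.permCongr g) = cyc g := by
  have hext : e.permCongr g = g.extendDomain
      (e.trans (Equiv.subtypeUnivEquiv (fun _ : β => trivial)).symm) := by
    ext x
    rw [Equiv.Perm.extendDomain_apply_subtype _ _ trivial]
    simp [Equiv.subtypeUnivEquiv]
  have hct : (e.permCongr g).cycleType = g.cycleType := by
    rw [hext, Equiv.Perm.cycleType_extendDomain]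
  rw [cyc, cyc, hct]
  congr 1
  refine Finset.card_bij' (fun x _ => e.symm x) (fun i _ => e i) ?_ ?_ ?_ ?_
  · intro x hx
    simp only [Finset.mem_filter, Finset.mem_univ, true_and] at hx ⊢
    have := congrArg e.symm hx
    simpa using this
  · intro i hi
    simp only [Finset.mem_filter, Finset.mem_univ, true_and] at hi ⊢
    simp [hi]
  · intro x _; simp
  · intro i _; simp

lemma extendDomain_eq_ofSubtype {γ : Type*} [Fintype γ] [DecidableEq γ] {p : β → Prop}
    [DecidablePred p] (f : γ ≃ Subtype p) (g : Equiv.Perm γ) :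
    g.extendDomain f = Equiv.Perm.ofSubtype (f.permCongr g) := by
  ext x
  by_cases hx : p x
  · rw [Equiv.Perm.extendDomain_apply_subtype _ _ hx,
      Equiv.Perm.ofSubtype_apply_of_mem _ hx]
    rfl
  · rw [Equiv.Perm.extendDomain_apply_not_subtype _ _ hx,
      Equiv.Perm.ofSubtype_apply_of_not_mem _ hx]

lemma cyc_extendDomain {γ : Type*} [Fintype γ] [DecidableEq γ] {p : β → Prop}
    [DecidablePred p] (f : γ ≃ Subtype p) (g : Equiv.Perm γ) :
    cyc (g.extendDomain f) = cyc g + (Finset.univ.filter fun x => ¬ p x).card := by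
  rw [extendDomain_eq_ofSubtype, cyc_ofSubtype, cyc_permCongr]

end S

lemma decomposeFin_zero {n : ℕ} (e : Equiv.Perm (Fin n)) :
    Equiv.Perm.decomposeFin.symm (0, e) = e.extendDomain (finSuccAboveEquiv 0) := by
  apply Equiv.ext
  intro x
  refine Fin.cases ?_ (fun i => ?_) x
  · rw [Equiv.Perm.decomposeFin_symm_apply_zero,
      Equiv.Perm.extendDomain_apply_not_subtype _ _ (by simp)]
  · rw [Equiv.Perm.decomposeFin_symm_apply_succ, Equiv.swap_self, Equiv.refl_apply,
      Equiv.Perm.extendDomain_apply_subtype e (finSuccAboveEquiv 0) (Fin.succ_ne_zero i)]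
    have h1 : (finSuccAboveEquiv (0 : Fin (n+1))).symm ⟨i.succ, Fin.succ_ne_zero i⟩ = i := by
      rw [Equiv.symm_apply_eq]
      apply Subtype.ext
      simp [finSuccAboveEquiv_apply, Fin.zero_succAbove]
    rw [h1]
    simp [finSuccAboveEquiv_apply, Fin.zero_succAbove]

lemma cyc_decomposeFin_zero {n : ℕ} (e : Equiv.Perm (Fin n)) :
    cyc (Equiv.Perm.decomposeFin.symm (0, e)) = cyc e + 1 := by
  rw [decomposeFin_zero, cyc_extendDomain]
  congr 1
  have : (Finset.univ.filter fun x : Fin (n+1) => ¬ x ≠ 0) = {0} := by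
    ext x; simp
  rw [this, Finset.card_singleton]

lemma decomposeFin_swap {n : ℕ} (p : Fin (n+1)) (e : Equiv.Perm (Fin n)) :
    Equiv.Perm.decomposeFin.symm (p, e)
      = Equiv.swap 0 p * Equiv.Perm.decomposeFin.symm (0, e) := by
  ext x
  refine Fin.cases ?_ (fun i => ?_) x
  · simp
  · simp

lemma cyc_decomposeFin_ne {n : ℕ} {p : Fin (n+1)} (hp : p ≠ 0) (e : Equiv.Perm (Fin n)) :
    cyc (Equiv.Perm.decomposeFin.symm (p, e)) = cyc e := by
  have h0 : (Equiv.Perm.decomposeFin.symm (0, e)) 0 = 0 :=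
    Equiv.Perm.decomposeFin_symm_apply_zero 0 e
  have := cyc_swap_mul (σ := Equiv.Perm.decomposeFin.symm (0, e)) (a := 0) (b := p) h0 hp
  rw [← decomposeFin_swap, cyc_decomposeFin_zero] at this
  omega

section A
variable {R : Type*} [CommRing R]

lemma rf_succ_s8 (α : R) (n : ℕ) : rf α (n+1) = rf α n * (α + n) := by
  rw [rf, rf, ascPochhammer_succ_right, Polynomial.eval_mul, Polynomial.eval_add,
    Polynomial.eval_X, Polynomial.eval_natCast]

lemma perm_sum_cyc (n : ℕ) (α : R) :
    ∑ π : Equiv.Perm (Fin n), α ^ cyc π = rf α n := by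
  induction n with
  | zero =>
    have h : ∀ π : Equiv.Perm (Fin 0), cyc π = 0 := by
      intro π
      have hπ : π = 1 := Subsingleton.elim _ _
      subst hπ
      rw [cyc]
      simp [Equiv.Perm.cycleType_one]
    rw [Finset.sum_congr rfl (fun π _ => by rw [h π, pow_zero]), Finset.sum_const,
      Finset.card_univ]
    simp [rf, ascPochhammer_zero]
  | succ n ih =>
    rw [← Equiv.sum_comp Equiv.Perm.decomposeFin.symm (fun π => α ^ cyc π),
      Fintype.sum_prod_type, Finset.sum_comm]
    have hinner : ∀ e : Equiv.Perm (Fin n),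
        (∑ p : Fin (n+1), α ^ cyc (Equiv.Perm.decomposeFin.symm (p, e)))
          = (n : R) * α ^ cyc e + α ^ (cyc e + 1) := by
      intro e
      rw [Finset.sum_eq_sum_sdiff_singleton_add (Finset.mem_univ (0 : Fin (n+1)))
        (fun p => α ^ cyc (Equiv.Perm.decomposeFin.symm (p, e))), cyc_decomposeFin_zero]
      congr 1
      rw [Finset.sum_congr rfl (fun p hp => by
          rw [cyc_decomposeFin_ne (by simpa using (Finset.mem_sdiff.mp hp).2) e]),
        Finset.sum_const, Finset.card_sdiff_of_subset (by simp), Finset.card_univ, Finset.card_singleton,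
        Fintype.card_fin, nsmul_eq_mul]
      simp
    rw [Finset.sum_congr rfl (fun e _ => hinner e), Finset.sum_add_distrib,
      Finset.sum_congr rfl (fun e _ => pow_succ α (cyc e)), ← Finset.mul_sum, ← Finset.sum_mul,
      ih, rf_succ_s8]
    ring

lemma derangement_sum_eq {β : Type*} [Fintype β] [DecidableEq β] {m : ℕ}
    (h : Fintype.card β = m) (α : R) :
    ∑ π ∈ Finset.univ.filter (fun π : Equiv.Perm β => ∀ i, π i ≠ i), α ^ cyc π
      = Dder m α := by
  classical
  have e : β ≃ Fin m := Fintype.equivFinOfCardEq h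
  rw [Dder]
  refine Finset.sum_bij' (fun π _ => e.permCongr π) (fun σ _ => e.symm.permCongr σ)
    ?_ ?_ ?_ ?_ ?_
  · intro π hπ
    simp only [Finset.mem_filter, Finset.mem_univ, true_and] at hπ ⊢
    intro i
    simp only [Equiv.permCongr_apply]
    intro hcontra
    exact hπ (e.symm i) (by simpa using congrArg e.symm hcontra)
  · intro σ hσ
    simp only [Finset.mem_filter, Finset.mem_univ, true_and] at hσ ⊢
    intro i
    simp only [Equiv.permCongr_apply]
    intro hcontra
    exact hσ (e i) (by simpa using congrArg e hcontra)
  · intro π _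
    ext x
    simp
  · intro σ _
    ext x
    simp
  · intro π _
    rw [cyc_permCongr]

lemma fix_cond {n : ℕ} {S : Finset (Fin n)} {π : Equiv.Perm (Fin n)}
    (hπ : Finset.univ.filter (fun i => π i = i) = S) :
    ∀ x, x ∉ S ↔ π x ∉ S := by
  have hfix : ∀ x, π x = x ↔ x ∈ S := by
    intro x
    have := Finset.ext_iff.mp hπ x
    simpa using this
  intro x
  constructor
  · intro hx hmem
    have h1 : π (π x) = π x := (hfix (π x)).mpr hmem
    have h2 : π x = x := π.injective h1
    rw [h2] at hmem
    exact hx hmem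
  · intro hx hmem
    have h2 : π x = x := (hfix x).mpr hmem
    rw [h2] at hx
    exact hx hmem

lemma ofSubtype_subtypePerm_fix {n : ℕ} {S : Finset (Fin n)} {π : Equiv.Perm (Fin n)}
    (hπ : Finset.univ.filter (fun i => π i = i) = S) :
    Equiv.Perm.ofSubtype (π.subtypePerm (p := fun x => x ∉ S) (fun x => (fix_cond hπ x).symm)) = π := by
  have hfix : ∀ x, π x = x ↔ x ∈ S := by
    intro x
    have := Finset.ext_iff.mp hπ x
    simpa using this
  apply Equiv.ext
  intro x
  by_cases hx : x ∉ S
  · rw [Equiv.Perm.ofSubtype_apply_of_mem (p := fun x => x ∉ S) _ hx,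
      Equiv.Perm.subtypePerm_apply]
  · rw [Equiv.Perm.ofSubtype_apply_of_not_mem (p := fun x => x ∉ S) _ hx]
    rw [not_not] at hx
    exact ((hfix x).mpr hx).symm

lemma fiber_sum_eq {n : ℕ} (S : Finset (Fin n)) (α : R) :
    ∑ π ∈ Finset.univ.filter
      (fun π : Equiv.Perm (Fin n) => Finset.univ.filter (fun i => π i = i) = S),
      α ^ cyc π = α ^ S.card * Dder (n - S.card) α := by
  have hcard : Fintype.card {x : Fin n // x ∉ S} = n - S.card := by
    rw [Fintype.card_subtype]
    have : Finset.univ.filter (fun x : Fin n => x ∉ S) = Finset.univ \ S := by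
      ext x; simp
    rw [this, Finset.card_sdiff_of_subset (Finset.subset_univ S), Finset.card_univ, Fintype.card_fin]
  rw [← derangement_sum_eq hcard α, Finset.mul_sum]
  have hSfilt : (Finset.univ.filter fun x : Fin n => ¬ x ∉ S) = S := by
    ext x; simp
  refine Finset.sum_bij'
    (fun π hπ => π.subtypePerm (fun x => (fix_cond
      ((Finset.mem_filter.mp hπ).2) x).symm))
    (fun g _ => Equiv.Perm.ofSubtype g)
    ?_ ?_ ?_ ?_ ?_
  · intro π hπ
    simp only [Finset.mem_filter, Finset.mem_univ, true_and]
    intro i hcontra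
    have hfx := (Finset.mem_filter.mp hπ).2
    have hi : (i : Fin n) ∉ S := i.2
    have : π (i : Fin n) = i := congrArg Subtype.val hcontra
    have hmem := Finset.ext_iff.mp hfx (i : Fin n)
    simp only [Finset.mem_filter, Finset.mem_univ, true_and] at hmem
    exact hi (hmem.mp this)
  · intro g hg
    simp only [Finset.mem_filter, Finset.mem_univ, true_and] at hg ⊢
    ext x
    simp only [Finset.mem_filter, Finset.mem_univ, true_and]
    by_cases hx : x ∉ S
    · rw [Equiv.Perm.ofSubtype_apply_of_mem g hx]
      constructor
      · intro h
        exact absurd (Subtype.ext h : g ⟨x, hx⟩ = ⟨x, hx⟩) (hg ⟨x, hx⟩)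
      · intro h; exact absurd h hx
    · rw [Equiv.Perm.ofSubtype_apply_of_not_mem g hx]
      simp only [not_not] at hx
      simp [hx]
  · intro π hπ
    exact ofSubtype_subtypePerm_fix ((Finset.mem_filter.mp hπ).2)
  · intro g hg
    apply Equiv.ext
    intro x
    apply Subtype.ext
    simp only [Equiv.Perm.subtypePerm_apply]
    rw [Equiv.Perm.ofSubtype_apply_of_mem g x.2, Subtype.coe_eta]
  · intro π hπ
    have hfx := (Finset.mem_filter.mp hπ).2
    conv_lhs => rw [← ofSubtype_subtypePerm_fix hfx]
    rw [cyc_ofSubtype, hSfilt, pow_add]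
    ring

lemma rf_eq_sum_Dder (n : ℕ) (α : R) :
    rf α n = ∑ k ∈ Finset.range (n + 1),
      (n.choose k : R) * α ^ k * Dder (n - k) α := by
  rw [← perm_sum_cyc n α,
    ← Finset.sum_fiberwise Finset.univ
      (fun π : Equiv.Perm (Fin n) => Finset.univ.filter fun i => π i = i)
      (fun π => α ^ cyc π)]
  rw [Finset.sum_congr rfl (fun S _ => fiber_sum_eq S α)]
  have huniv : (Finset.univ : Finset (Finset (Fin n)))
      = (Finset.univ : Finset (Fin n)).powerset := Finset.powerset_univ.symm
  rw [huniv, Finset.sum_powerset]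
  have hcard : ((Finset.univ : Finset (Fin n)).card) = n := by
    rw [Finset.card_univ, Fintype.card_fin]
  rw [hcard]
  refine Finset.sum_congr rfl (fun j hj => ?_)
  have hin : ∀ S ∈ Finset.powersetCard j (Finset.univ : Finset (Fin n)),
      α ^ S.card * Dder (n - S.card) α = α ^ j * Dder (n - j) α := by
    intro S hS
    rw [Finset.mem_powersetCard_univ.mp hS]
  rw [Finset.sum_congr rfl hin, Finset.sum_const, Finset.card_powersetCard, hcard,
    nsmul_eq_mul]
  ring

lemma alt_sum (m : ℕ) :
    ∑ i ∈ Finset.range (m + 1), (-1 : R) ^ (m - i) * (m.choose i : R)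
      = if m = 0 then 1 else 0 := by
  have h := add_pow (1 : R) (-1) m
  simp only [one_pow, one_mul] at h
  rw [show (1 : R) + -1 = 0 by ring, zero_pow_eq] at h
  rw [← h]

lemma binom_inv (f g : ℕ → R) (x : R)
    (h : ∀ m, g m = ∑ k ∈ Finset.range (m + 1), (m.choose k : R) * x ^ (m - k) * f k)
    (n : ℕ) :
    ∑ k ∈ Finset.range (n + 1), (n.choose k : R) * (-x) ^ (n - k) * g k = f n := by
  have hexp : ∀ k ∈ Finset.range (n + 1),
      (n.choose k : R) * (-x) ^ (n - k) * g k
        = ∑ j ∈ Finset.range (n + 1), (if j ≤ k then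
            (n.choose k : R) * (-x) ^ (n - k) * ((k.choose j : R) * x ^ (k - j) * f j)
          else 0) := by
    intro k hk
    rw [h k, Finset.mul_sum, ← Finset.sum_filter]
    have hfilt : (Finset.range (n + 1)).filter (fun j => j ≤ k) = Finset.range (k + 1) := by
      ext j
      simp only [Finset.mem_filter, Finset.mem_range, Nat.lt_succ_iff]
      rw [Finset.mem_range, Nat.lt_succ_iff] at hk
      omega
    rw [hfilt]
  rw [Finset.sum_congr rfl hexp, Finset.sum_comm]
  have hinner : ∀ j ∈ Finset.range (n + 1),
      (∑ k ∈ Finset.range (n + 1), if j ≤ k then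
            (n.choose k : R) * (-x) ^ (n - k) * ((k.choose j : R) * x ^ (k - j) * f j)
          else 0)
        = (if n - j = 0 then 1 else 0) * ((n.choose j : R) * x ^ (n - j) * f j) := by
    intro j hj
    rw [Finset.mem_range, Nat.lt_succ_iff] at hj
    rw [← Finset.sum_filter]
    have hfilt : (Finset.range (n + 1)).filter (fun k => j ≤ k) = Finset.Ico j (n + 1) := by
      ext k
      simp only [Finset.mem_filter, Finset.mem_range, Finset.mem_Ico]
      omega
    rw [hfilt, Finset.sum_Ico_eq_sum_range]
    have hterm : ∀ i ∈ Finset.range (n + 1 - j),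
        (n.choose (j + i) : R) * (-x) ^ (n - (j + i))
            * (((j + i).choose j : R) * x ^ (j + i - j) * f j)
          = ((-1 : R) ^ ((n - j) - i) * ((n - j).choose i : R))
              * ((n.choose j : R) * x ^ (n - j) * f j) := by
      intro i hi
      rw [Finset.mem_range] at hi
      have hij : j + i ≤ n := by omega
      have hc : (n.choose (j + i) : ℕ) * ((j + i).choose j) = n.choose j * (n - j).choose i := by
        have := Nat.choose_mul (n := n) (k := j + i) (s := j) (Nat.le_add_right j i)
        simpa using this
      have hcR : (n.choose (j + i) : R) * ((j + i).choose j : R)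
          = (n.choose j : R) * ((n - j).choose i : R) := by
        exact_mod_cast congrArg (fun t : ℕ => (t : R)) hc
      have hxp : (-x) ^ (n - (j + i)) = (-1 : R) ^ ((n - j) - i) * x ^ (n - (j + i)) := by
        rw [neg_pow]
        congr 2
        omega
      have hxx : x ^ (n - (j + i)) * x ^ (j + i - j) = x ^ (n - j) := by
        rw [← pow_add]
        congr 1
        omega
      calc (n.choose (j + i) : R) * (-x) ^ (n - (j + i))
            * (((j + i).choose j : R) * x ^ (j + i - j) * f j)
          = ((n.choose (j + i) : R) * ((j + i).choose j : R))
              * ((-1 : R) ^ ((n - j) - i) * (x ^ (n - (j + i)) * x ^ (j + i - j)) * f j) := by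
            rw [hxp]; ring
        _ = ((-1 : R) ^ ((n - j) - i) * ((n - j).choose i : R))
              * ((n.choose j : R) * x ^ (n - j) * f j) := by
            rw [hcR, hxx]; ring
    rw [Finset.sum_congr rfl hterm, ← Finset.sum_mul]
    have hrange : n + 1 - j = (n - j) + 1 := by omega
    rw [hrange, alt_sum (n - j)]
  rw [Finset.sum_congr rfl hinner]
  rw [Finset.sum_eq_single n ?_ ?_]
  · simp
  · intro j hj hne
    rw [Finset.mem_range, Nat.lt_succ_iff] at hj
    rw [if_neg (by omega)]
    ring
  · intro hn
    exact absurd (Finset.self_mem_range_succ n) hn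


lemma rf_eq_sum_Dder' (m : ℕ) (α : R) :
    rf α m = ∑ k ∈ Finset.range (m + 1), (m.choose k : R) * α ^ (m - k) * Dder k α := by
  rw [rf_eq_sum_Dder m α]
  rw [← Finset.sum_range_reflect (fun k => (m.choose k : R) * α ^ (m - k) * Dder k α) (m + 1)]
  refine Finset.sum_congr rfl fun j hj => ?_
  rw [Finset.mem_range, Nat.lt_succ_iff] at hj
  have h1 : m + 1 - 1 - j = m - j := by omega
  have h2 : m - (m - j) = j := by omega
  rw [h1, Nat.choose_symm hj, h2]

end A

theorem stmt8 {R : Type*} [CommRing R] (n : ℕ) (α : R) :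
    Dder n α = Ch α (-α) n ∧
    Dder n α = ∑ k ∈ Finset.range (n + 1),
      (n.choose k : R) * rf α k * (-α) ^ (n - k) := by
  have hmain := binom_inv (fun m => Dder m α) (fun m => rf α m) α
    (fun m => rf_eq_sum_Dder' m α) n
  have h2 : Dder n α = ∑ k ∈ Finset.range (n + 1),
      (n.choose k : R) * rf α k * (-α) ^ (n - k) := by
    rw [← hmain]
    refine Finset.sum_congr rfl fun k _ => ?_
    ring
  exact ⟨by rw [Ch]; exact h2, h2⟩
end

section
/- Trilinear specialization: as formal power series in y and z, sum_{m,n>=0} C_m(a,r) * C_n(b,s) * C_{m+n}(c,t) * y^m z^n / (m! n!) = e^((r*y+s*z)*t) * sum_{m,n>=0} (a)_m (b)_n (c)_{m+n} * y^m z^n / (m! n! * (1-t*y)^(m+a) * (1-t*z)^(n+b) * (1-r*y-s*z)^(m+n+c)). -/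
open Finset

section helpers

lemma rf_add {R : Type*} [CommRing R] (a : R) (m k : ℕ) :
    rf a (m + k) = rf a m * rf (a + m) k := by
  show (ascPochhammer R (m + k)).eval a = _
  rw [← ascPochhammer_mul, Polynomial.eval_mul, Polynomial.eval_comp]
  simp [rf]

variable {M₀ : Type*} [AddCommMonoid M₀] [Module ℚ M₀]

lemma trunc (L K : ℕ) (hK : K ≤ L) (h : ℕ → M₀) :
    ∑ x ∈ Finset.range (K+1), h x = ∑ x ∈ Finset.range (L+1), if x ≤ K then h x else 0 := by
  rw [← Finset.sum_filter]
  congr 1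
  ext x
  simp [Nat.lt_succ_iff]
  omega

lemma H4 (A B : ℕ) (g : ℕ → M₀) :
    ∑ γ ∈ Finset.range (A+B+1), ((A+B).choose γ : ℚ) • g γ
      = ∑ x ∈ Finset.range (A+1), ∑ y ∈ Finset.range (B+1),
          ((A.choose x : ℚ) * (B.choose y : ℚ)) • g (x+y) := by
  have step1 : ∀ γ ∈ Finset.range (A+B+1),
      ((A+B).choose γ : ℚ) • g γ
        = ∑ x ∈ Finset.range (A+B+1),
            if x ≤ γ then ((A.choose x : ℚ) * (B.choose (γ-x) : ℚ)) • g γ else 0 := by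
    intro γ hγ
    rw [Finset.mem_range, Nat.lt_succ_iff] at hγ
    rw [Nat.add_choose_eq, Finset.Nat.sum_antidiagonal_eq_sum_range_succ_mk]
    push_cast
    rw [Finset.sum_smul]
    exact trunc _ _ hγ _
  rw [Finset.sum_congr rfl step1, Finset.sum_comm]
  refine Finset.sum_subset (by intro x hx; simp at *; omega) ?_ |>.symm.trans
      (Finset.sum_congr rfl ?_)
  · intro x hx hx'
    have hxA : A < x := by simp [Nat.lt_succ_iff] at hx hx' ⊢; omega
    apply Finset.sum_eq_zero
    intro γ hγ
    split
    · rw [Nat.choose_eq_zero_of_lt hxA]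
      simp
    · rfl
  · intro x hx
    rw [Finset.mem_range, Nat.lt_succ_iff] at hx
    rw [← Finset.sum_filter]
    have hfil : (Finset.range (A+B+1)).filter (fun γ => x ≤ γ) = Finset.Ico x (A+B+1) := by
      ext γ; simp [Nat.lt_succ_iff]; omega
    rw [hfil, Finset.sum_Ico_eq_sum_range]
    have hr : A + B + 1 - x = (A - x + B) + 1 := by omega
    rw [hr]
    refine (Finset.sum_subset (by intro y hy; simp at *; omega) ?_).symm.trans
        (Finset.sum_congr rfl ?_)
    · intro y hy hy'
      have hyB : B < y := by simp [Nat.lt_succ_iff] at hy hy' ⊢; omega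
      rw [Nat.add_sub_cancel_left, Nat.choose_eq_zero_of_lt hyB]
      simp
    · intro y hy
      rw [Nat.add_sub_cancel_left]

lemma split4 (K A1 A2 B1 B2 : ℕ) (hK : K = A1 + A2 + (B1 + B2)) (g : ℕ → M₀) :
    ∑ γ ∈ Finset.range (K+1), (K.choose γ : ℚ) • g γ
      = ∑ m ∈ Finset.range (A1+1), ∑ u ∈ Finset.range (A2+1),
        ∑ n ∈ Finset.range (B1+1), ∑ v ∈ Finset.range (B2+1),
          ((A1.choose m : ℚ) * (A2.choose u : ℚ) *
            ((B1.choose n : ℚ) * (B2.choose v : ℚ))) • g (m + u + (n + v)) := by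
  subst hK
  rw [H4 (A1+A2) (B1+B2) g]
  have e1 : ∀ x ∈ Finset.range (A1+A2+1),
      (∑ y ∈ Finset.range (B1+B2+1),
        (((A1+A2).choose x : ℚ) * ((B1+B2).choose y : ℚ)) • g (x+y))
      = ((A1+A2).choose x : ℚ) •
          ∑ y ∈ Finset.range (B1+B2+1), (((B1+B2).choose y : ℚ)) • g (x+y) := by
    intro x _
    rw [Finset.smul_sum]
    exact Finset.sum_congr rfl fun y _ => mul_smul _ _ _
  rw [Finset.sum_congr rfl e1, H4 A1 A2]
  refine Finset.sum_congr rfl fun m _ => Finset.sum_congr rfl fun u _ => ?_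
  rw [H4 B1 B2 (fun y => g (m + u + y)), Finset.smul_sum]
  refine Finset.sum_congr rfl fun n _ => ?_
  rw [Finset.smul_sum]
  refine Finset.sum_congr rfl fun v _ => ?_
  rw [smul_smul]

lemma simplex (L : ℕ) (f : ℕ → ℕ → ℕ → M₀) :
    ∑ m ∈ Finset.range (L+1), ∑ p ∈ Finset.range (L-m+1), ∑ i ∈ Finset.range (L-m-p+1), f m p i
      = ∑ α ∈ Finset.range (L+1), ∑ m ∈ Finset.range (α+1), ∑ u ∈ Finset.range (L-α+1),
          f m (L-α-u) (α-m) := by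
  rw [Finset.sum_sigma', Finset.sum_sigma', Finset.sum_sigma', Finset.sum_sigma']
  refine Finset.sum_nbij' (fun x => ⟨⟨x.1.1 + x.2, x.1.1⟩, L - x.1.1 - x.1.2 - x.2⟩)
    (fun x => ⟨⟨x.1.2, L - x.1.1 - x.2⟩, x.1.1 - x.1.2⟩) ?_ ?_ ?_ ?_ ?_
  · rintro ⟨⟨m, p⟩, i⟩ hx
    simp only [Finset.mem_sigma, Finset.mem_range, Nat.lt_succ_iff] at hx ⊢
    omega
  · rintro ⟨⟨al, m⟩, u⟩ hx
    simp only [Finset.mem_sigma, Finset.mem_range, Nat.lt_succ_iff] at hx ⊢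
    omega
  · rintro ⟨⟨m, p⟩, i⟩ hx
    simp only [Finset.mem_sigma, Finset.mem_range, Nat.lt_succ_iff] at hx
    have e2 : L - (m + i) - (L - m - p - i) = p := by omega
    have e3 : m + i - m = i := by omega
    simp only [e2, e3]
  · rintro ⟨⟨al, m⟩, u⟩ hx
    simp only [Finset.mem_sigma, Finset.mem_range, Nat.lt_succ_iff] at hx
    have e2 : m + (al - m) = al := by omega
    have e3 : L - m - (L - al - u) - (al - m) = u := by omega
    simp only [e3, e2]
  · rintro ⟨⟨m, p⟩, i⟩ hx
    simp only [Finset.mem_sigma, Finset.mem_range, Nat.lt_succ_iff] at hx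
    simp only
    have e2 : L - (m + i) - (L - m - p - i) = p := by omega
    have e3 : m + i - m = i := by omega
    rw [e2, e3]

end helpers

section main
variable {R : Type*} [CommRing R] [Algebra ℚ R]

lemma tterm (n1 n2 n3 : ℕ) (x1 y1 x2 y2 x3 y3 : R) :
    ((n1:R) * x1 * y1) * ((n2:R) * x2 * y2) * ((n3:R) * x3 * y3)
      = ((n1:ℚ) * (n2:ℚ)) • ((n3:ℚ) • (x1 * y1 * (x2 * y2) * (x3 * y3))) := by
  rw [Algebra.smul_def, Algebra.smul_def, map_natCast, map_mul, map_natCast, map_natCast]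
  ring

noncomputable def Tm (a b c r s t : R) (M N m n p q i j : ℕ) : R :=
  (((m.factorial * n.factorial : ℕ) : ℚ)⁻¹ •
      (rf a m * rf b n * rf c (m + n))) *
    ((p.factorial : ℚ)⁻¹ • (r * t) ^ p) *
    ((q.factorial : ℚ)⁻¹ • (s * t) ^ q) *
    ((i.factorial : ℚ)⁻¹ • (rf (a + (m : R)) i * t ^ i)) *
    ((j.factorial : ℚ)⁻¹ • (rf (b + (n : R)) j * t ^ j)) *
    ((((M - m - p - i).factorial * (N - n - q - j).factorial : ℕ) : ℚ)⁻¹ •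
      (rf (c + (m : R) + (n : R)) ((M - m - p - i) + (N - n - q - j)) *
        r ^ (M - m - p - i) * s ^ (N - n - q - j)))

noncomputable def Em (a b c r s t : R) (M N α β m u n v : ℕ) : R :=
  (((M.factorial * N.factorial : ℕ) : ℚ)⁻¹ * ((M.choose α : ℚ) * (N.choose β : ℚ)) *
      ((α.choose m : ℚ) * ((M-α).choose u : ℚ) *
        ((β.choose n : ℚ) * ((N-β).choose v : ℚ)))) •
    (rf a α * r ^ (M-α) * (rf b β * s ^ (N-β)) *
      (rf c (m+u+(n+v)) * t ^ (M+N-(m+u+(n+v)))))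

lemma lhs_to (a b c r s t : R) (M N : ℕ) :
    ((M.factorial * N.factorial : ℕ) : ℚ)⁻¹ • (Ch a r M * Ch b s N * Ch c t (M + N))
      = ∑ α ∈ Finset.range (M+1), ∑ β ∈ Finset.range (N+1),
          ∑ m ∈ Finset.range (α+1), ∑ u ∈ Finset.range (M-α+1),
            ∑ n ∈ Finset.range (β+1), ∑ v ∈ Finset.range (N-β+1),
              Em a b c r s t M N α β m u n v := by
  simp only [Ch]
  simp only [Finset.sum_mul, Finset.mul_sum, Finset.smul_sum]
  rw [Finset.sum_comm]
  refine (Finset.sum_congr rfl fun β _ => Finset.sum_comm).trans ?_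
  rw [Finset.sum_comm]
  refine Finset.sum_congr rfl fun α hα => Finset.sum_congr rfl fun β hβ => ?_
  rw [Finset.mem_range, Nat.lt_succ_iff] at hα hβ
  have key : ∀ γ ∈ Finset.range (M+N+1),
      ((M.factorial * N.factorial : ℕ) : ℚ)⁻¹ •
        ((M.choose α : R) * rf a α * r ^ (M - α) * ((N.choose β : R) * rf b β * s ^ (N - β)) *
          ((M+N).choose γ * rf c γ * t ^ (M + N - γ)))
      = (((M.factorial * N.factorial : ℕ) : ℚ)⁻¹ * ((M.choose α : ℚ) * (N.choose β : ℚ))) •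
          (((M+N).choose γ : ℚ) •
            (rf a α * r ^ (M-α) * (rf b β * s ^ (N-β)) * (rf c γ * t ^ (M+N-γ)))) := by
    intro γ _
    rw [tterm, smul_smul]
  rw [Finset.sum_congr rfl key, ← Finset.smul_sum,
    split4 (M+N) α (M-α) β (N-β) (by omega)
      (fun γ => rf a α * r ^ (M-α) * (rf b β * s ^ (N-β)) * (rf c γ * t ^ (M+N-γ)))]
  simp only [Finset.smul_sum]
  refine Finset.sum_congr rfl fun m _ => Finset.sum_congr rfl fun u _ =>
    Finset.sum_congr rfl fun n _ => Finset.sum_congr rfl fun v _ => ?_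
  rw [smul_smul]
  rfl

lemma rhs_to (a b c r s t : R) (M N : ℕ) :
    (∑ m ∈ Finset.range (M+1), ∑ n ∈ Finset.range (N+1),
      ∑ p ∈ Finset.range (M-m+1), ∑ q ∈ Finset.range (N-n+1),
        ∑ i ∈ Finset.range (M-m-p+1), ∑ j ∈ Finset.range (N-n-q+1),
          Tm a b c r s t M N m n p q i j)
      = ∑ α ∈ Finset.range (M+1), ∑ β ∈ Finset.range (N+1),
          ∑ m ∈ Finset.range (α+1), ∑ u ∈ Finset.range (M-α+1),
            ∑ n ∈ Finset.range (β+1), ∑ v ∈ Finset.range (N-β+1),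
              Tm a b c r s t M N m n (M-α-u) (N-β-v) (α-m) (β-n) := by
  calc
    _ = ∑ m ∈ Finset.range (M+1), ∑ p ∈ Finset.range (M-m+1),
          ∑ n ∈ Finset.range (N+1), ∑ q ∈ Finset.range (N-n+1),
            ∑ i ∈ Finset.range (M-m-p+1), ∑ j ∈ Finset.range (N-n-q+1),
              Tm a b c r s t M N m n p q i j :=
      Finset.sum_congr rfl fun m _ => Finset.sum_comm
    _ = ∑ m ∈ Finset.range (M+1), ∑ p ∈ Finset.range (M-m+1),
          ∑ n ∈ Finset.range (N+1), ∑ i ∈ Finset.range (M-m-p+1),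
            ∑ q ∈ Finset.range (N-n+1), ∑ j ∈ Finset.range (N-n-q+1),
              Tm a b c r s t M N m n p q i j :=
      Finset.sum_congr rfl fun m _ => Finset.sum_congr rfl fun p _ =>
        Finset.sum_congr rfl fun n _ => Finset.sum_comm
    _ = ∑ m ∈ Finset.range (M+1), ∑ p ∈ Finset.range (M-m+1),
          ∑ i ∈ Finset.range (M-m-p+1), ∑ n ∈ Finset.range (N+1),
            ∑ q ∈ Finset.range (N-n+1), ∑ j ∈ Finset.range (N-n-q+1),
              Tm a b c r s t M N m n p q i j :=
      Finset.sum_congr rfl fun m _ => Finset.sum_congr rfl fun p _ => Finset.sum_comm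
    _ = ∑ α ∈ Finset.range (M+1), ∑ m ∈ Finset.range (α+1), ∑ u ∈ Finset.range (M-α+1),
          ∑ n ∈ Finset.range (N+1), ∑ q ∈ Finset.range (N-n+1),
            ∑ j ∈ Finset.range (N-n-q+1),
              Tm a b c r s t M N m n (M-α-u) q (α-m) j :=
      simplex M (fun m p i => ∑ n ∈ Finset.range (N+1), ∑ q ∈ Finset.range (N-n+1),
        ∑ j ∈ Finset.range (N-n-q+1), Tm a b c r s t M N m n p q i j)
    _ = ∑ α ∈ Finset.range (M+1), ∑ m ∈ Finset.range (α+1), ∑ u ∈ Finset.range (M-α+1),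
          ∑ β ∈ Finset.range (N+1), ∑ n ∈ Finset.range (β+1),
            ∑ v ∈ Finset.range (N-β+1),
              Tm a b c r s t M N m n (M-α-u) (N-β-v) (α-m) (β-n) :=
      Finset.sum_congr rfl fun α _ => Finset.sum_congr rfl fun m _ =>
        Finset.sum_congr rfl fun u _ =>
          simplex N (fun n q j => Tm a b c r s t M N m n (M-α-u) q (α-m) j)
    _ = ∑ α ∈ Finset.range (M+1), ∑ m ∈ Finset.range (α+1), ∑ β ∈ Finset.range (N+1),
          ∑ u ∈ Finset.range (M-α+1), ∑ n ∈ Finset.range (β+1),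
            ∑ v ∈ Finset.range (N-β+1),
              Tm a b c r s t M N m n (M-α-u) (N-β-v) (α-m) (β-n) :=
      Finset.sum_congr rfl fun α _ => Finset.sum_congr rfl fun m _ => Finset.sum_comm
    _ = _ :=
      Finset.sum_congr rfl fun α _ => Finset.sum_comm

lemma term_eq (a b c r s t : R) (M N α β m u n v : ℕ)
    (hα : α ≤ M) (hβ : β ≤ N) (hm : m ≤ α) (hu : u ≤ M - α) (hn : n ≤ β) (hv : v ≤ N - β) :
    Tm a b c r s t M N m n (M-α-u) (N-β-v) (α-m) (β-n) = Em a b c r s t M N α β m u n v := by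
  obtain ⟨i, rfl⟩ : ∃ k, α = m + k := ⟨α - m, by omega⟩
  obtain ⟨p, rfl⟩ : ∃ k, M = m + i + u + k := ⟨M - (m + i) - u, by omega⟩
  obtain ⟨j, rfl⟩ : ∃ k, β = n + k := ⟨β - n, by omega⟩
  obtain ⟨q, rfl⟩ : ∃ k, N = n + j + v + k := ⟨N - (n + j) - v, by omega⟩
  simp only [Tm, Em]
  have e1 : m + i + u + p - (m + i) - u = p := by omega
  have e2 : m + i - m = i := by omega
  have e5 : m + i + u + p - (m + i) = u + p := by omega
  have f1 : n + j + v + q - (n + j) - v = q := by omega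
  have f2 : n + j - n = j := by omega
  have f5 : n + j + v + q - (n + j) = v + q := by omega
  have e4 : m + i + u + p - m - (m + i + u + p - (m + i) - u) - (m + i - m) = u := by omega
  have f4 : n + j + v + q - n - (n + j + v + q - (n + j) - v) - (n + j - n) = v := by omega
  have g1 : m + i + u + p + (n + j + v + q) - (m + u + (n + v)) = i + p + (j + q) := by omega
  have e6 : u + p - u = p := by omega
  have f6 : v + q - v = q := by omega
  have e7 : m + i + u + p - m - p - i = u := by omega
  have f7 : n + j + v + q - n - q - j = v := by omega
  simp only [e4, f4, e1, e2, e5, f1, f2, f5, g1, e6, f6, e7, f7]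
  have h1 : rf a (m + i) = rf a m * rf (a + (m : R)) i := rf_add a m i
  have h2 : rf b (n + j) = rf b n * rf (b + (n : R)) j := rf_add b n j
  have h3 : rf c (m + u + (n + v)) = rf c (m + n) * rf (c + (m : R) + (n : R)) (u + v) := by
    rw [show m + u + (n + v) = (m + n) + (u + v) by ring, rf_add]
    push_cast
    ring
  rw [h1, h2, h3]
  simp only [smul_mul_smul_comm]
  congr 1
  · -- scalar identity in ℚ
    have hc : ∀ x y : ℕ, ((x+y).choose x : ℚ)
        = ((x+y).factorial : ℚ) / (x.factorial * y.factorial) := by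
      intro x y
      rw [eq_div_iff (by positivity)]
      calc ((x+y).choose x : ℚ) * (x.factorial * y.factorial)
          = (((x+y).choose x * x.factorial * y.factorial : ℕ) : ℚ) := by push_cast; ring
        _ = _ := by
            rw [show (x+y).choose x * x.factorial * y.factorial = (x+y).factorial by
              have h := Nat.choose_mul_factorial_mul_factorial (Nat.le_add_right x y)
              rwa [Nat.add_sub_cancel_left] at h]
    rw [show m + i + u + p = (m + i) + (u + p) by ring,
      show n + j + v + q = (n + j) + (v + q) by ring,
      hc (m+i) (u+p), hc (n+j) (v+q), hc m i, hc u p, hc n j, hc v q]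
    push_cast
    field_simp
  · -- monomial identity in R
    ring

end main

/-- Trilinear specialization, stated coefficient by coefficient in the two
formal variables `y`, `z`: for all `M`, `N`, the coefficient of `y^M z^N` of
`∑_{m,n} C_m(a,r) C_n(b,s) C_{m+n}(c,t) y^m z^n/(m! n!)`, namely
`C_M(a,r) C_N(b,s) C_{M+N}(c,t)/(M! N!)`, equals the coefficient of `y^M z^N` of
`e^{(ry+sz)t} ∑_{m,n} (a)_m (b)_n (c)_{m+n} y^m z^n /(m! n! (1-ty)^{m+a} (1-tz)^{n+b} (1-ry-sz)^{m+n+c})`,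
expanded via `e^{w} = ∑ w^p/p!` and `(1-w)^{-u} = ∑ (u)_d w^d/d!`. -/
theorem stmt11 {R : Type*} [CommRing R] [Algebra ℚ R] (a b c r s t : R) :
    ∀ M N : ℕ,
      ((M.factorial * N.factorial : ℕ) : ℚ)⁻¹ •
          (Ch a r M * Ch b s N * Ch c t (M + N)) =
        ∑ m ∈ Finset.range (M + 1), ∑ n ∈ Finset.range (N + 1),
          ∑ p ∈ Finset.range (M - m + 1), ∑ q ∈ Finset.range (N - n + 1),
            ∑ i ∈ Finset.range (M - m - p + 1),
              ∑ j ∈ Finset.range (N - n - q + 1),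
                (((m.factorial * n.factorial : ℕ) : ℚ)⁻¹ •
                    (rf a m * rf b n * rf c (m + n))) *
                  ((p.factorial : ℚ)⁻¹ • (r * t) ^ p) *
                  ((q.factorial : ℚ)⁻¹ • (s * t) ^ q) *
                  ((i.factorial : ℚ)⁻¹ • (rf (a + (m : R)) i * t ^ i)) *
                  ((j.factorial : ℚ)⁻¹ • (rf (b + (n : R)) j * t ^ j)) *
                  ((((M - m - p - i).factorial * (N - n - q - j).factorial : ℕ) : ℚ)⁻¹ •
                    (rf (c + (m : R) + (n : R)) ((M - m - p - i) + (N - n - q - j)) *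
                      r ^ (M - m - p - i) * s ^ (N - n - q - j))) := by
  intro M N
  show _ = ∑ m ∈ Finset.range (M+1), ∑ n ∈ Finset.range (N+1),
      ∑ p ∈ Finset.range (M-m+1), ∑ q ∈ Finset.range (N-n+1),
        ∑ i ∈ Finset.range (M-m-p+1), ∑ j ∈ Finset.range (N-n-q+1),
          Tm a b c r s t M N m n p q i j
  rw [rhs_to, lhs_to]
  refine Finset.sum_congr rfl fun α hα => Finset.sum_congr rfl fun β hβ =>
    Finset.sum_congr rfl fun m hm => Finset.sum_congr rfl fun u hu =>
      Finset.sum_congr rfl fun n hn => Finset.sum_congr rfl fun v hv => ?_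
  rw [Finset.mem_range, Nat.lt_succ_iff] at hα hβ hm hu hn hv
  exact (term_eq a b c r s t M N α β m u n v hα hβ hm hu hn hv).symm
end
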